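/- Let C be sorted so that the AV-scores s(c_1) ≥ s(c_2) ≥ ... ≥ s(c_m), where s(c) = |{v ∈ V : c ∈ A(v)}|. Define α(v) = k·s(c_k)/|V| + ∑_{j=1}^{k-1} [c_j ∈ A(v)] · (s(c_j) − s(c_k))/s(c_j). Then α lies in the TU-core of the AV multi-winner voting game: ∑_{v∈V} α(v) equals the maximal AV-score of a size-k committee, and for every coalition V' ⊆ V and every committee W' with |W'| ≤ ⌊|V'|·k/|V|⌋, ∑_{v∈V'} α(v) ≥ ∑_{v∈V'} |A(v) ∩ W'|. -/

import Mathlib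

lemma aux_sum_inter {V : Type*} {m : ℕ} (A : V → Finset (Fin m)) (V' : Finset V)
    (W : Finset (Fin m)) :
    ∑ v ∈ V', (A v ∩ W).card = ∑ j ∈ W, (V'.filter (fun v => j ∈ A v)).card := by
  have h1 : ∀ v, (A v ∩ W).card = ∑ j ∈ W, if j ∈ A v then 1 else 0 := by
    intro v
    rw [Finset.inter_comm, ← Finset.filter_mem_eq_inter, Finset.card_filter]
  simp_rw [h1, Finset.card_filter]
  exact Finset.sum_comm

lemma aux_le_apply {k : ℕ} (f : Fin k → ℕ) (hf : StrictMono f) (i : Fin k) : (i : ℕ) ≤ f i := by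
  obtain ⟨i, hi⟩ := i
  induction i with
  | zero => exact Nat.zero_le _
  | succ n ih =>
      have h1 : (⟨n, Nat.lt_of_succ_lt hi⟩ : Fin k) < ⟨n + 1, hi⟩ := by
        simp [Fin.lt_def]
      have := hf h1
      have := ih (Nat.lt_of_succ_lt hi)
      simp only [Fin.val_mk] at *
      omega

lemma aux_image {m t : ℕ} (ht : t ≤ m) :
    Finset.univ.filter (fun j : Fin m => (j : ℕ) < t) =
      Finset.image (Fin.castLE ht) Finset.univ := by
  ext j
  simp only [Finset.mem_filter, Finset.mem_univ, true_and, Finset.mem_image]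
  constructor
  · intro h
    exact ⟨⟨(j : ℕ), h⟩, rfl⟩
  · rintro ⟨i, -, rfl⟩
    exact i.2

lemma aux_card {m t : ℕ} (ht : t ≤ m) :
    (Finset.univ.filter (fun j : Fin m => (j : ℕ) < t)).card = t := by
  rw [aux_image ht, Finset.card_image_of_injective _ (Fin.castLE_injective ht),
    Finset.card_univ, Fintype.card_fin]

lemma aux_max {m k : ℕ} (hkm : k ≤ m) (s : Fin m → ℕ)
    (hsort : ∀ i j : Fin m, i ≤ j → s j ≤ s i)
    (W : Finset (Fin m)) (hW : W.card = k) :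
    ∑ j ∈ W, s j ≤ ∑ j ∈ Finset.univ.filter (fun j : Fin m => (j : ℕ) < k), s j := by
  have himg : W = Finset.image (W.orderEmbOfFin hW) Finset.univ := by
    ext j
    simp only [Finset.mem_image, Finset.mem_univ, true_and]
    constructor
    · intro hj
      have : j ∈ Set.range (W.orderEmbOfFin hW) := by
        rw [Finset.range_orderEmbOfFin]; exact hj
      obtain ⟨i, hi⟩ := this
      exact ⟨i, hi⟩
    · rintro ⟨i, rfl⟩
      exact W.orderEmbOfFin_mem hW i
  rw [aux_image hkm]
  conv_lhs => rw [himg]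
  rw [Finset.sum_image (fun a _ b _ h => (W.orderEmbOfFin hW).injective h),
    Finset.sum_image (fun a _ b _ h => Fin.castLE_injective hkm h)]
  refine Finset.sum_le_sum fun i _ => ?_
  refine hsort _ _ ?_
  have hle : (i : ℕ) ≤ ((W.orderEmbOfFin hW i : Fin m) : ℕ) :=
    aux_le_apply (fun i => ((W.orderEmbOfFin hW i : Fin m) : ℕ))
      (fun a b hab => by
        have := (W.orderEmbOfFin hW).strictMono hab
        exact this) i
  exact hle

/-- The baseline-plus-surplus utility vector of Algorithm 1 lies in the TU-core
of the AV game (alternatives sorted by decreasing approval score). -/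
theorem stmt4 {V : Type*} [Fintype V] [Nonempty V]
    (m k : ℕ) (hk : 0 < k) (hkm : k ≤ m) (hk1 : k - 1 < m)
    (A : V → Finset (Fin m))
    (s : Fin m → ℕ)
    (hs : ∀ j : Fin m, s j = (Finset.univ.filter (fun v : V => j ∈ A v)).card)
    (hsort : ∀ i j : Fin m, i ≤ j → s j ≤ s i)
    (α : V → ℝ)
    (hα : ∀ v : V, α v = k * (s ⟨k - 1, hk1⟩ : ℝ) / Fintype.card V +
      ∑ j : Fin m, if (j : ℕ) < k - 1 ∧ j ∈ A v then
        ((s j : ℝ) - (s ⟨k - 1, hk1⟩ : ℝ)) / (s j : ℝ) else 0) :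
    (∃ W₀ : Finset (Fin m), W₀.card = k ∧
      (∀ W : Finset (Fin m), W.card = k →
        ∑ v : V, ((A v ∩ W).card : ℝ) ≤ ∑ v : V, ((A v ∩ W₀).card : ℝ)) ∧
      ∑ v : V, α v = ∑ v : V, ((A v ∩ W₀).card : ℝ)) ∧
    ∀ (V' : Finset V) (W' : Finset (Fin m)),
      W'.card ≤ V'.card * k / Fintype.card V →
      ∑ v ∈ V', ((A v ∩ W').card : ℝ) ≤ ∑ v ∈ V', α v := by
  classical
  have hn0 : 0 < Fintype.card V := Fintype.card_pos
  have hnR : (0 : ℝ) < (Fintype.card V : ℝ) := by exact_mod_cast hn0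
  set ck : Fin m := ⟨k - 1, hk1⟩ with hck
  set sk : ℝ := (s ck : ℝ) with hsk
  have hsk0 : (0 : ℝ) ≤ sk := Nat.cast_nonneg _
  -- s j ≥ s ck for j with j.val < k - 1 (even ≤ k-1)
  have hdom : ∀ j : Fin m, (j : ℕ) ≤ k - 1 → sk ≤ (s j : ℝ) := by
    intro j hj
    have : j ≤ ck := by
      rw [Fin.le_def]; exact hj
    rw [hsk]
    exact_mod_cast hsort j ck this
  -- number of approvers of j within V'
  -- rewrite of coalition sums of α
  have hswap : ∀ (V' : Finset V) (j : Fin m),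
      (∑ v ∈ V', if (j : ℕ) < k - 1 ∧ j ∈ A v then ((s j : ℝ) - sk) / (s j : ℝ) else 0)
      = if (j : ℕ) < k - 1 then
          ((V'.filter (fun v => j ∈ A v)).card : ℝ) * (((s j : ℝ) - sk) / (s j : ℝ)) else 0 := by
    intro V' j
    by_cases hj : (j : ℕ) < k - 1
    · simp only [hj, true_and, if_true]
      rw [← Finset.sum_filter, Finset.sum_const, nsmul_eq_mul]
    · simp [hj]
  have hsum_alpha : ∀ V' : Finset V, ∑ v ∈ V', α v =
      (V'.card : ℝ) * (k * sk / Fintype.card V) +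
      ∑ j ∈ Finset.univ.filter (fun j : Fin m => (j : ℕ) < k - 1),
        ((V'.filter (fun v => j ∈ A v)).card : ℝ) * (((s j : ℝ) - sk) / (s j : ℝ)) := by
    intro V'
    simp_rw [hα]
    rw [Finset.sum_add_distrib, Finset.sum_const, nsmul_eq_mul]
    congr 1
    rw [Finset.sum_comm, Finset.sum_filter]
    exact Finset.sum_congr rfl fun j _ => hswap V' j
  have hnj_le : ∀ (V' : Finset V) (j : Fin m),
      (V'.filter (fun v => j ∈ A v)).card ≤ s j := by
    intro V' j
    rw [hs j]
    exact Finset.card_le_card (Finset.filter_subset_filter _ (Finset.subset_univ V'))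
  constructor
  · -- the grand coalition part
    refine ⟨Finset.univ.filter (fun j : Fin m => (j : ℕ) < k), aux_card hkm, ?_, ?_⟩
    · intro W hW
      have h1 : ∀ (W : Finset (Fin m)),
          ∑ v : V, ((A v ∩ W).card : ℝ) = ((∑ j ∈ W, s j : ℕ) : ℝ) := by
        intro W
        rw [← Nat.cast_sum, aux_sum_inter A Finset.univ W]
        congr 1
        exact Finset.sum_congr rfl fun j _ => (hs j).symm
      rw [h1, h1]
      exact_mod_cast aux_max hkm s hsort W hW
    · -- equality of total utility
      have h1 : ∑ v : V, ((A v ∩ (Finset.univ.filter (fun j : Fin m => (j : ℕ) < k))).card : ℝ)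
          = ∑ j ∈ Finset.univ.filter (fun j : Fin m => (j : ℕ) < k), (s j : ℝ) := by
        rw [← Nat.cast_sum, aux_sum_inter A Finset.univ, Nat.cast_sum]
        exact Finset.sum_congr rfl fun j _ => by rw [hs j]
      rw [h1, hsum_alpha Finset.univ]
      have hcardV : ((Finset.univ : Finset V).card : ℝ) = (Fintype.card V : ℝ) := by
        rw [Finset.card_univ]
      rw [hcardV]
      have hterm : ∀ j ∈ Finset.univ.filter (fun j : Fin m => (j : ℕ) < k - 1),
          ((Finset.univ.filter (fun v : V => j ∈ A v)).card : ℝ) *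
            (((s j : ℝ) - sk) / (s j : ℝ)) = (s j : ℝ) - sk := by
        intro j hj
        rw [Finset.mem_filter] at hj
        rw [← hs j]
        by_cases h0 : (s j : ℝ) = 0
        · have hsk' : sk = 0 := le_antisymm (h0 ▸ hdom j (le_of_lt hj.2)) hsk0
          rw [h0, hsk']
          simp
        · rw [mul_comm, div_mul_cancel₀ _ h0]
      rw [Finset.sum_congr rfl hterm]
      -- split the size-k filter into the size-(k-1) filter plus ck
      have hsplit : Finset.univ.filter (fun j : Fin m => (j : ℕ) < k)
          = insert ck (Finset.univ.filter (fun j : Fin m => (j : ℕ) < k - 1)) := by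
        ext j
        simp only [Finset.mem_filter, Finset.mem_univ, true_and, Finset.mem_insert]
        constructor
        · intro hj
          rcases Nat.lt_or_ge (j : ℕ) (k - 1) with h | h
          · exact Or.inr h
          · left
            apply Fin.ext
            simp only [hck]
            omega
        · rintro (rfl | hj)
          · simp only [hck]; omega
          · omega
      have hmem : ck ∉ Finset.univ.filter (fun j : Fin m => (j : ℕ) < k - 1) := by
        simp [hck]
      rw [hsplit, Finset.sum_insert hmem]
      rw [Finset.sum_sub_distrib, Finset.sum_const, aux_card (le_of_lt hk1), nsmul_eq_mul]
      have hcast : ((k - 1 : ℕ) : ℝ) = (k : ℝ) - 1 := by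
        have : 1 ≤ k := hk
        push_cast [Nat.cast_sub this]
        ring
      rw [hcast]
      field_simp
      ring
  · -- the core condition
    intro V' W' hcard
    have hLHS : ∑ v ∈ V', ((A v ∩ W').card : ℝ)
        = ∑ j ∈ W', ((V'.filter (fun v => j ∈ A v)).card : ℝ) := by
      rw [← Nat.cast_sum, aux_sum_inter A V' W', Nat.cast_sum]
    rw [hLHS, hsum_alpha V']
    set F' := W'.filter (fun j : Fin m => (j : ℕ) < k - 1) with hF'
    -- bound terms in W' with large index by sk
    have hbig : ∀ j ∈ W'.filter (fun j : Fin m => ¬ (j : ℕ) < k - 1),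
        ((V'.filter (fun v => j ∈ A v)).card : ℝ) ≤ sk := by
      intro j hj
      rw [Finset.mem_filter] at hj
      have h1 : ck ≤ j := by
        rw [Fin.le_def]
        simp only [hck]
        omega
      have h2 : s j ≤ s ck := hsort ck j h1
      have h3 := hnj_le V' j
      rw [hsk]
      exact_mod_cast le_trans h3 h2
    -- bound terms in W' with small index
    have hsmall : ∀ j ∈ F',
        ((V'.filter (fun v => j ∈ A v)).card : ℝ) ≤
          ((V'.filter (fun v => j ∈ A v)).card : ℝ) * (((s j : ℝ) - sk) / (s j : ℝ)) + sk := by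
      intro j hj
      rw [hF', Finset.mem_filter] at hj
      set nj : ℝ := ((V'.filter (fun v => j ∈ A v)).card : ℝ) with hnj
      have hnj0 : (0 : ℝ) ≤ nj := Nat.cast_nonneg _
      have hnjle : nj ≤ (s j : ℝ) := by rw [hnj]; exact_mod_cast hnj_le V' j
      by_cases h0 : (s j : ℝ) = 0
      · have : nj = 0 := le_antisymm (h0 ▸ hnjle) hnj0
        rw [this, h0]
        simpa using hsk0
      · have hkey : nj * (((s j : ℝ) - sk) / (s j : ℝ)) + sk - nj
            = sk * ((s j : ℝ) - nj) / (s j : ℝ) := by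
          field_simp
          ring
        have hpos : (0 : ℝ) < (s j : ℝ) := lt_of_le_of_ne (Nat.cast_nonneg _) (Ne.symm h0)
        have h4 : (0 : ℝ) ≤ sk * ((s j : ℝ) - nj) / (s j : ℝ) :=
          div_nonneg (mul_nonneg hsk0 (sub_nonneg.mpr hnjle)) (le_of_lt hpos)
        linarith [hkey, h4]
    -- split the LHS sum
    have hsplitW : ∑ j ∈ W', ((V'.filter (fun v => j ∈ A v)).card : ℝ)
        = ∑ j ∈ F', ((V'.filter (fun v => j ∈ A v)).card : ℝ)
          + ∑ j ∈ W'.filter (fun j : Fin m => ¬ (j : ℕ) < k - 1),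
            ((V'.filter (fun v => j ∈ A v)).card : ℝ) := by
      rw [hF']
      exact (Finset.sum_filter_add_sum_filter_not W' _ _).symm
    rw [hsplitW]
    have hb1 : ∑ j ∈ F', ((V'.filter (fun v => j ∈ A v)).card : ℝ)
        ≤ ∑ j ∈ F', (((V'.filter (fun v => j ∈ A v)).card : ℝ)
            * (((s j : ℝ) - sk) / (s j : ℝ)) + sk) :=
      Finset.sum_le_sum hsmall
    have hb2 : ∑ j ∈ W'.filter (fun j : Fin m => ¬ (j : ℕ) < k - 1),
        ((V'.filter (fun v => j ∈ A v)).card : ℝ)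
        ≤ (W'.filter (fun j : Fin m => ¬ (j : ℕ) < k - 1)).card • sk := by
      rw [← Finset.sum_const]
      exact Finset.sum_le_sum hbig
    rw [Finset.sum_add_distrib, Finset.sum_const] at hb1
    -- surplus sum over F' is at most the surplus sum over everything
    have hb3 : ∑ j ∈ F', ((V'.filter (fun v => j ∈ A v)).card : ℝ)
          * (((s j : ℝ) - sk) / (s j : ℝ))
        ≤ ∑ j ∈ Finset.univ.filter (fun j : Fin m => (j : ℕ) < k - 1),
          ((V'.filter (fun v => j ∈ A v)).card : ℝ) * (((s j : ℝ) - sk) / (s j : ℝ)) := by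
      refine Finset.sum_le_sum_of_subset_of_nonneg ?_ ?_
      · intro j hj
        rw [hF', Finset.mem_filter] at hj
        exact Finset.mem_filter.mpr ⟨Finset.mem_univ _, hj.2⟩
      · intro j hj _
        rw [Finset.mem_filter] at hj
        refine mul_nonneg (Nat.cast_nonneg _) (div_nonneg ?_ (Nat.cast_nonneg _))
        have := hdom j (le_of_lt hj.2)
        linarith
    -- cards of the two parts of W' sum to W'.card
    have hcards : F'.card + (W'.filter (fun j : Fin m => ¬ (j : ℕ) < k - 1)).card = W'.card := by
      rw [hF']
      exact Finset.card_filter_add_card_filter_not _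
    -- bound W'.card • sk
    have hWsk : (W'.card : ℝ) * sk ≤ (V'.card : ℝ) * (k * sk / Fintype.card V) := by
      have h1 : (W'.card : ℝ) ≤ ((V'.card * k / Fintype.card V : ℕ) : ℝ) := by
        exact_mod_cast hcard
      have h2 : ((V'.card * k / Fintype.card V : ℕ) : ℝ)
          ≤ ((V'.card * k : ℕ) : ℝ) / (Fintype.card V : ℝ) := Nat.cast_div_le
      have h3 : (W'.card : ℝ) * sk ≤ (((V'.card * k : ℕ) : ℝ) / (Fintype.card V : ℝ)) * sk :=
        mul_le_mul_of_nonneg_right (le_trans h1 h2) hsk0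
      calc (W'.card : ℝ) * sk ≤ (((V'.card * k : ℕ) : ℝ) / (Fintype.card V : ℝ)) * sk := h3
        _ = (V'.card : ℝ) * (k * sk / Fintype.card V) := by push_cast; ring
    have hfinal : (F'.card : ℝ) * sk
        + ((W'.filter (fun j : Fin m => ¬ (j : ℕ) < k - 1)).card : ℝ) * sk
        = (W'.card : ℝ) * sk := by
      rw [← add_mul]
      congr 1
      exact_mod_cast hcards
    simp only [nsmul_eq_mul] at hb1 hb2
    linarith [hb1, hb2, hb3, hWsk, hfinal]
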